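/- arXiv:2502.07159 — 3 statements merged into one kernel-verified Lean document; each statement's English description precedes it below -/
import Mathlib

section
/- If $k \leq \sqrt{N}$ (for positive integers $k, N$), then $\prod_{i=0}^{k-1} \frac{N}{N-i} \leq 1 + \frac{k^2}{N}$. -/
lemma weierstrass_aux (f : ℕ → ℝ) (s : Finset ℕ) (h0 : ∀ i ∈ s, 0 ≤ f i)
    (h1 : ∀ i ∈ s, f i ≤ 1) : 1 - ∑ i ∈ s, f i ≤ ∏ i ∈ s, (1 - f i) := by
  induction s using Finset.induction_on with
  | empty => simp
  | @insert a s hx ih =>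
    rw [Finset.sum_insert hx, Finset.prod_insert hx]
    have h0' : ∀ i ∈ s, 0 ≤ f i := fun i hi => h0 i (Finset.mem_insert_of_mem hi)
    have h1' : ∀ i ∈ s, f i ≤ 1 := fun i hi => h1 i (Finset.mem_insert_of_mem hi)
    have ha0 := h0 a (Finset.mem_insert_self a s)
    have ha1 := h1 a (Finset.mem_insert_self a s)
    have hsum : (0:ℝ) ≤ ∑ i ∈ s, f i := Finset.sum_nonneg h0'
    nlinarith [ih h0' h1']

lemma gauss_aux (n : ℕ) : ∑ i ∈ Finset.range n, (i:ℝ) = n*(n-1)/2 := by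
  induction n with
  | zero => simp
  | succ m ih => rw [Finset.sum_range_succ, ih]; push_cast; ring

theorem stmt_0 (N k : ℕ) (hN : 0 < N) (hk : 0 < k) (h : (k : ℝ) ≤ Real.sqrt N) :
    ∏ i ∈ Finset.range k, (N : ℝ) / ((N : ℝ) - i) ≤ 1 + (k : ℝ) ^ 2 / N := by
  have hN0 : (0:ℝ) < N := by exact_mod_cast hN
  have hk0 : (1:ℝ) ≤ k := by exact_mod_cast hk
  have hk2 : (k:ℝ)^2 ≤ N := by
    have := Real.sq_sqrt hN0.le
    nlinarith [Real.sqrt_nonneg (N:ℝ)]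
  have hkN : (k:ℝ) ≤ N := by nlinarith
  have hpos : ∀ i ∈ Finset.range k, (0:ℝ) < 1 - (i:ℝ)/N := by
    intro i hi
    have hi' : (i:ℝ) < k := by exact_mod_cast Finset.mem_range.mp hi
    have : (i:ℝ)/N < 1 := by
      rw [div_lt_one hN0]; linarith
    linarith
  have hrw : ∏ i ∈ Finset.range k, (N : ℝ) / ((N : ℝ) - i)
      = (∏ i ∈ Finset.range k, (1 - (i:ℝ)/N))⁻¹ := by
    rw [← Finset.prod_inv_distrib]
    apply Finset.prod_congr rfl
    intro i hi
    have hi' : (i:ℝ) < k := by exact_mod_cast Finset.mem_range.mp hi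
    have hNi : (N:ℝ) - i > 0 := by linarith
    field_simp
  rw [hrw]
  have hsum : ∑ i ∈ Finset.range k, (i:ℝ)/N = (k*(k-1)/2)/N := by
    rw [← Finset.sum_div, gauss_aux]
  have hlb : 1 - (k*(k-1)/2)/N ≤ ∏ i ∈ Finset.range k, (1 - (i:ℝ)/N) := by
    rw [← hsum]
    apply weierstrass_aux
    · intro i hi; positivity
    · intro i hi; have := hpos i hi; linarith
  have hprodpos : (0:ℝ) < ∏ i ∈ Finset.range k, (1 - (i:ℝ)/N) :=
    Finset.prod_pos hpos
  rw [inv_le_iff_one_le_mul₀ hprodpos]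
  have key : (1:ℝ) ≤ (1 + (k:ℝ)^2/N) * (1 - (k*(k-1)/2)/N) := by
    rw [← sub_nonneg]
    have expand : (1 + (k:ℝ)^2/N) * (1 - (k*(k-1)/2)/N) - 1
        = ((k:ℝ)^2*N - N*(k*(k-1)/2) - k^2*(k*(k-1)/2)) / (N*N) := by
      field_simp; ring
    rw [expand]
    apply div_nonneg _ (by positivity)
    nlinarith [mul_nonneg (sub_nonneg.mpr hk2) (sub_nonneg.mpr hk0),
      mul_nonneg (sub_nonneg.mpr hk2) (by positivity : (0:ℝ) ≤ (k:ℝ)^2)]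
  calc (1:ℝ) ≤ (1 + (k:ℝ)^2/N) * (1 - (k*(k-1)/2)/N) := key
    _ ≤ (1 + (k:ℝ)^2/N) * ∏ i ∈ Finset.range k, (1 - (i:ℝ)/N) := by
        apply mul_le_mul_of_nonneg_left hlb
        positivity
end

section
/- Let $A$ be a row-stochastic matrix indexed by a finite set $\mathcal{U}$ for which the uniform distribution on $\mathcal{U}$ is stationary (i.e., $A$ is doubly stochastic). Let $f, g : \mathcal{U} \to \mathbb{R}$ and suppose that for every $X$ in the support of $f$, the total transition probability from $X$ into the support of $g$ under $A$ is at most $\epsilon$. Then $|\langle f, A g \rangle| \leq \sqrt{\epsilon}\, \|f\|_2 \|g\|_2$, where $\langle f, h \rangle = \sum_{x \in \mathcal{U}} f(x) h(x)$ and $\|f\|_2 = \sqrt{\langle f, f\rangle}$. -/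
theorem stmt_2 {U : Type*} [Fintype U] [DecidableEq U] (A : U → U → ℝ) (ε : ℝ)
    (hnn : ∀ x y, 0 ≤ A x y)
    (hrow : ∀ x, ∑ y, A x y = 1)
    (hcol : ∀ y, ∑ x, A x y = 1)
    (f g : U → ℝ)
    (hesc : ∀ x, f x ≠ 0 → ∑ y ∈ Finset.univ.filter (fun y => g y ≠ 0), A x y ≤ ε) :
    |∑ x, f x * ∑ y, A x y * g y|
      ≤ Real.sqrt ε * Real.sqrt (∑ x, f x ^ 2) * Real.sqrt (∑ x, g x ^ 2) := by
  classical
  by_cases hf : ∀ x, f x = 0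
  · simp [hf]
  push_neg at hf
  obtain ⟨x₀, hx₀⟩ := hf
  have hε : 0 ≤ ε :=
    le_trans (Finset.sum_nonneg fun y _ => hnn x₀ y) (hesc x₀ hx₀)
  set F : Finset U := Finset.univ.filter (fun x => f x ≠ 0) with hF
  set G : Finset U := Finset.univ.filter (fun y => g y ≠ 0) with hG
  -- rewrite the double sum over F ×ˢ G
  have h1 : ∑ x, f x * ∑ y, A x y * g y
      = ∑ p ∈ F ×ˢ G, f p.1 * (A p.1 p.2 * g p.2) := by
    rw [Finset.sum_product]
    rw [Finset.sum_filter]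
    congr 1; ext x
    by_cases hx : f x = 0
    · simp [hx]
    · simp only [hx, if_neg, Ne, not_false_iff, if_true]
      rw [Finset.mul_sum, Finset.sum_filter]
      congr 1; ext y
      by_cases hy : g y = 0
      · simp [hy]
      · simp [hy]
  have habs : |∑ x, f x * ∑ y, A x y * g y|
      ≤ ∑ p ∈ F ×ˢ G, (Real.sqrt (A p.1 p.2) * |f p.1|)
          * (Real.sqrt (A p.1 p.2) * |g p.2|) := by
    rw [h1]
    refine le_trans (Finset.abs_sum_le_sum_abs _ _) (le_of_eq ?_)
    refine Finset.sum_congr rfl fun p _ => ?_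
    rw [abs_mul, abs_mul, abs_of_nonneg (hnn p.1 p.2)]
    have : Real.sqrt (A p.1 p.2) * Real.sqrt (A p.1 p.2) = A p.1 p.2 :=
      Real.mul_self_sqrt (hnn p.1 p.2)
    ring_nf
    rw [Real.sq_sqrt (hnn p.1 p.2)]
    ring
  -- Cauchy–Schwarz
  have hcs : (∑ p ∈ F ×ˢ G, (Real.sqrt (A p.1 p.2) * |f p.1|)
          * (Real.sqrt (A p.1 p.2) * |g p.2|)) ^ 2
      ≤ (∑ p ∈ F ×ˢ G, A p.1 p.2 * f p.1 ^ 2)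
        * (∑ p ∈ F ×ˢ G, A p.1 p.2 * g p.2 ^ 2) := by
    have key := Finset.sum_mul_sq_le_sq_mul_sq (F ×ˢ G)
      (fun p => Real.sqrt (A p.1 p.2) * |f p.1|)
      (fun p => Real.sqrt (A p.1 p.2) * |g p.2|)
    calc (∑ p ∈ F ×ˢ G, (Real.sqrt (A p.1 p.2) * |f p.1|)
          * (Real.sqrt (A p.1 p.2) * |g p.2|)) ^ 2
        ≤ (∑ p ∈ F ×ˢ G, (Real.sqrt (A p.1 p.2) * |f p.1|) ^ 2)
          * (∑ p ∈ F ×ˢ G, (Real.sqrt (A p.1 p.2) * |g p.2|) ^ 2) := key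
      _ = (∑ p ∈ F ×ˢ G, A p.1 p.2 * f p.1 ^ 2)
          * (∑ p ∈ F ×ˢ G, A p.1 p.2 * g p.2 ^ 2) := by
          congr 1 <;> refine Finset.sum_congr rfl fun p _ => ?_ <;>
            rw [mul_pow, Real.sq_sqrt (hnn p.1 p.2), sq_abs]
  have hP : ∑ p ∈ F ×ˢ G, A p.1 p.2 * f p.1 ^ 2 ≤ ε * ∑ x, f x ^ 2 := by
    rw [Finset.sum_product]
    calc ∑ x ∈ F, ∑ y ∈ G, A x y * f x ^ 2
        = ∑ x ∈ F, f x ^ 2 * ∑ y ∈ G, A x y := by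
          refine Finset.sum_congr rfl fun x _ => ?_
          rw [Finset.mul_sum]; refine Finset.sum_congr rfl fun y _ => ?_; ring
      _ ≤ ∑ x ∈ F, f x ^ 2 * ε := by
          refine Finset.sum_le_sum fun x hx => ?_
          have hfx : f x ≠ 0 := (Finset.mem_filter.mp hx).2
          exact mul_le_mul_of_nonneg_left (hesc x hfx) (sq_nonneg _)
      _ = ε * ∑ x ∈ F, f x ^ 2 := by rw [← Finset.sum_mul]; ring
      _ ≤ ε * ∑ x, f x ^ 2 := by
          refine mul_le_mul_of_nonneg_left ?_ hε
          exact Finset.sum_le_sum_of_subset_of_nonneg (Finset.filter_subset _ _)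
            (fun x _ _ => sq_nonneg _)
  have hQ : ∑ p ∈ F ×ˢ G, A p.1 p.2 * g p.2 ^ 2 ≤ ∑ x, g x ^ 2 := by
    rw [Finset.sum_product_right]
    calc ∑ y ∈ G, ∑ x ∈ F, A x y * g y ^ 2
        = ∑ y ∈ G, g y ^ 2 * ∑ x ∈ F, A x y := by
          refine Finset.sum_congr rfl fun y _ => ?_
          rw [Finset.mul_sum]; refine Finset.sum_congr rfl fun x _ => ?_; ring
      _ ≤ ∑ y ∈ G, g y ^ 2 * 1 := by
          refine Finset.sum_le_sum fun y _ => ?_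
          refine mul_le_mul_of_nonneg_left ?_ (sq_nonneg _)
          calc ∑ x ∈ F, A x y ≤ ∑ x, A x y :=
                Finset.sum_le_sum_of_subset_of_nonneg (Finset.filter_subset _ _)
                  (fun x _ _ => hnn x y)
            _ = 1 := hcol y
      _ ≤ ∑ y, g y ^ 2 := by
          simp only [mul_one]
          exact Finset.sum_le_sum_of_subset_of_nonneg (Finset.filter_subset _ _)
            (fun y _ _ => sq_nonneg _)
  have hsumnn : 0 ≤ ∑ p ∈ F ×ˢ G, (Real.sqrt (A p.1 p.2) * |f p.1|)
          * (Real.sqrt (A p.1 p.2) * |g p.2|) :=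
    Finset.sum_nonneg fun p _ => mul_nonneg
      (mul_nonneg (Real.sqrt_nonneg _) (abs_nonneg _))
      (mul_nonneg (Real.sqrt_nonneg _) (abs_nonneg _))
  have hPnn : 0 ≤ ∑ p ∈ F ×ˢ G, A p.1 p.2 * f p.1 ^ 2 :=
    Finset.sum_nonneg fun p _ => mul_nonneg (hnn _ _) (sq_nonneg _)
  have hQnn : 0 ≤ ∑ p ∈ F ×ˢ G, A p.1 p.2 * g p.2 ^ 2 :=
    Finset.sum_nonneg fun p _ => mul_nonneg (hnn _ _) (sq_nonneg _)
  calc |∑ x, f x * ∑ y, A x y * g y|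
      ≤ ∑ p ∈ F ×ˢ G, (Real.sqrt (A p.1 p.2) * |f p.1|)
          * (Real.sqrt (A p.1 p.2) * |g p.2|) := habs
    _ ≤ Real.sqrt ((∑ p ∈ F ×ˢ G, A p.1 p.2 * f p.1 ^ 2)
          * (∑ p ∈ F ×ˢ G, A p.1 p.2 * g p.2 ^ 2)) := by
        rw [← Real.sqrt_sq hsumnn]
        exact Real.sqrt_le_sqrt hcs
    _ = Real.sqrt (∑ p ∈ F ×ˢ G, A p.1 p.2 * f p.1 ^ 2)
          * Real.sqrt (∑ p ∈ F ×ˢ G, A p.1 p.2 * g p.2 ^ 2) :=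
        Real.sqrt_mul hPnn _
    _ ≤ Real.sqrt (ε * ∑ x, f x ^ 2) * Real.sqrt (∑ x, g x ^ 2) :=
        mul_le_mul (Real.sqrt_le_sqrt hP) (Real.sqrt_le_sqrt hQ)
          (Real.sqrt_nonneg _) (Real.sqrt_nonneg _)
    _ = Real.sqrt ε * Real.sqrt (∑ x, f x ^ 2) * Real.sqrt (∑ x, g x ^ 2) := by
        rw [Real.sqrt_mul hε]
end

section
/- With $Q_{m,m-1,k}$ and $Q_{m,m,k}$ the resampling operators on real functions on $(\{\pm1\}^m)^k$ (fixing one uniformly random coordinate vs. rerandomizing everything), for every $f : (\{\pm1\}^m)^k \to \mathbb{R}$ we have $|\langle f, (Q_{m,m-1,k} - Q_{m,m,k}) f \rangle| \leq \frac{1}{m} \langle f, f \rangle$. -/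
open Finset

def resEquiv {α : Type*} [DecidableEq α] (s : Finset α) (w : α → Bool) :
    {v : α → Bool // ∀ j ∈ s, v j = w j} ≃ ({j : α // j ∉ s} → Bool) where
  toFun v j := v.1 j.1
  invFun u := ⟨fun j => if h : j ∈ s then w j else u ⟨j, h⟩, by intro j hj; simp [hj]⟩
  left_inv v := by
    ext j
    by_cases h : j ∈ s
    · simp [h, v.2 j h]
    · simp [h]
  right_inv u := by
    ext j
    simp [j.2]

lemma card_res {m : ℕ} (s : Finset (Fin m)) (w : Fin m → Bool) :
    Fintype.card {v : Fin m → Bool // ∀ j ∈ s, v j = w j} = 2 ^ (m - s.card) := by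
  rw [Fintype.card_congr (resEquiv s w)]
  rw [Fintype.card_fun]
  congr 1
  rw [Fintype.card_subtype]
  have : univ.filter (fun j : Fin m => j ∉ s) = sᶜ := by ext j; simp
  rw [this, card_compl]
  simp

lemma card_filt' {m k : ℕ} (s : Finset (Fin m)) (W : Fin k → Fin m → Bool) :
    (Finset.univ.filter (fun Y : Fin k → Fin m → Bool => ∀ i, ∀ j ∈ s, Y i j = W i j)).card
      = 2 ^ ((m - s.card) * k) := by
  rw [← Fintype.card_subtype]
  rw [Fintype.card_congr (Equiv.subtypePiEquivPi (p := fun i (v : Fin m → Bool) => ∀ j ∈ s, v j = W i j))]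
  rw [Fintype.card_pi]
  simp [card_res, Finset.prod_const, pow_mul]

def filt {m k : ℕ} (a : Fin m) (X : Fin k → Fin m → Bool) : Finset (Fin k → Fin m → Bool) :=
  Finset.univ.filter (fun Y => ∀ i, Y i a = X i a)

lemma mem_filt {m k : ℕ} {a : Fin m} {X Y : Fin k → Fin m → Bool} :
    Y ∈ filt a X ↔ ∀ i, Y i a = X i a := by simp [filt]

lemma filt_symm {m k : ℕ} {a : Fin m} {X Y : Fin k → Fin m → Bool} :
    Y ∈ filt a X ↔ X ∈ filt a Y := by
  simp only [mem_filt]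
  exact ⟨fun h i => (h i).symm, fun h i => (h i).symm⟩

lemma filt_congr {m k : ℕ} {a : Fin m} {X Y : Fin k → Fin m → Bool} (h : Y ∈ filt a X) :
    filt a Y = filt a X := by
  rw [mem_filt] at h
  ext Z
  simp only [mem_filt]
  exact ⟨fun hz i => (hz i).trans (h i), fun hz i => (hz i).trans (h i).symm⟩

lemma card_filt_one {m k : ℕ} (a : Fin m) (X : Fin k → Fin m → Bool) :
    (filt a X).card = 2 ^ ((m - 1) * k) := by
  have h := card_filt' {a} X
  simp only [Finset.mem_singleton, forall_eq, Finset.card_singleton] at h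
  rw [← h]
  rfl

lemma card_filt_inter {m k : ℕ} {a b : Fin m} (hab : a ≠ b)
    (Y Z : Fin k → Fin m → Bool) :
    (filt a Y ∩ filt b Z).card = 2 ^ ((m - 2) * k) := by
  have h := card_filt' {a, b} (fun i j => if j = a then Y i a else Z i b)
  rw [Finset.card_insert_of_notMem (by simpa using hab), Finset.card_singleton] at h
  rw [← h]
  congr 1
  ext X
  simp only [Finset.mem_inter, mem_filt, Finset.mem_filter, Finset.mem_univ, true_and,
    Finset.mem_insert, Finset.mem_singleton]
  constructor
  · rintro ⟨h1, h2⟩ i j hj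
    rcases hj with rfl | rfl
    · simp [h1 i]
    · simp [hab.symm, h2 i]
  · intro h
    constructor
    · intro i
      have := h i a (Or.inl rfl)
      simpa using this
    · intro i
      have := h i b (Or.inr rfl)
      simpa [hab.symm] using this

noncomputable def Sa {m k : ℕ} (f : (Fin k → Fin m → Bool) → ℝ) (a : Fin m)
    (X : Fin k → Fin m → Bool) : ℝ := ∑ Y ∈ filt a X, f Y

lemma swap_filt {m k : ℕ} (a : Fin m) (F : (Fin k → Fin m → Bool) → (Fin k → Fin m → Bool) → ℝ) :
    ∑ X : Fin k → Fin m → Bool, ∑ Y ∈ filt a X, F X Y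
      = ∑ Y : Fin k → Fin m → Bool, ∑ X ∈ filt a Y, F X Y :=
  Finset.sum_comm' (fun X Y => by simp [filt_symm (X := X) (Y := Y), and_comm])

lemma sum_Sa {m k : ℕ} (f : (Fin k → Fin m → Bool) → ℝ) (a : Fin m) :
    ∑ X : Fin k → Fin m → Bool, Sa f a X
      = (2 : ℝ) ^ ((m - 1) * k) * ∑ X : Fin k → Fin m → Bool, f X := by
  unfold Sa
  rw [swap_filt]
  rw [Finset.mul_sum]
  refine Finset.sum_congr rfl (fun Y _ => ?_)
  rw [Finset.sum_const, card_filt_one, nsmul_eq_mul]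
  push_cast
  ring

lemma sum_Sa_mul_self {m k : ℕ} (f : (Fin k → Fin m → Bool) → ℝ) (a : Fin m) :
    ∑ X : Fin k → Fin m → Bool, Sa f a X * Sa f a X
      = (2 : ℝ) ^ ((m - 1) * k) * ∑ X : Fin k → Fin m → Bool, f X * Sa f a X := by
  have step1 : ∀ X : Fin k → Fin m → Bool, Sa f a X * Sa f a X
      = ∑ Y ∈ filt a X, f Y * Sa f a Y := by
    intro X
    rw [Sa, Finset.sum_mul]
    exact Finset.sum_congr rfl (fun Y hY => by unfold Sa; rw [filt_congr hY])
  rw [Finset.sum_congr rfl (fun X _ => step1 X), swap_filt]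
  rw [Finset.mul_sum]
  refine Finset.sum_congr rfl (fun Y _ => ?_)
  rw [Finset.sum_const, card_filt_one, nsmul_eq_mul]
  push_cast
  ring

lemma sum_Sa_mul_Sa {m k : ℕ} (f : (Fin k → Fin m → Bool) → ℝ) {a b : Fin m} (hab : a ≠ b) :
    ∑ X : Fin k → Fin m → Bool, Sa f a X * Sa f b X
      = (2 : ℝ) ^ ((m - 2) * k) *
        ((∑ X : Fin k → Fin m → Bool, f X) * (∑ X : Fin k → Fin m → Bool, f X)) := by
  have step1 : ∀ X : Fin k → Fin m → Bool, Sa f a X * Sa f b X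
      = ∑ Y ∈ filt a X, f Y * Sa f b X := by
    intro X; rw [Sa, Finset.sum_mul]
  rw [Finset.sum_congr rfl (fun X _ => step1 X), swap_filt]
  have step2 : ∀ Y : Fin k → Fin m → Bool, ∑ X ∈ filt a Y, f Y * Sa f b X
      = f Y * ((2 : ℝ) ^ ((m - 2) * k) * ∑ Z : Fin k → Fin m → Bool, f Z) := by
    intro Y
    rw [← Finset.mul_sum]
    congr 1
    have : ∑ X ∈ filt a Y, Sa f b X = ∑ X ∈ filt a Y, ∑ Z ∈ filt b X, f Z := rfl
    rw [this]
    have hswap : ∑ X ∈ filt a Y, ∑ Z ∈ filt b X, f Z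
        = ∑ Z : Fin k → Fin m → Bool, ∑ X ∈ filt a Y ∩ filt b Z, f Z := by
      refine Finset.sum_comm' (fun X Z => ?_)
      simp [Finset.mem_inter, filt_symm (X := X) (Y := Z), and_comm, and_assoc]
    rw [hswap, Finset.mul_sum]
    refine Finset.sum_congr rfl (fun Z _ => ?_)
    rw [Finset.sum_const, card_filt_inter hab, nsmul_eq_mul]
    push_cast
    ring
  rw [Finset.sum_congr rfl (fun Y _ => step2 Y), ← Finset.sum_mul]
  ring

theorem stmt_7 (m k : ℕ) (hm : 0 < m) (f : (Fin k → Fin m → Bool) → ℝ) :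
    let Qm1 : ((Fin k → Fin m → Bool) → ℝ) → ((Fin k → Fin m → Bool) → ℝ) :=
      fun g X => (m : ℝ)⁻¹ * ∑ a : Fin m, ((2 : ℝ) ^ ((m - 1) * k))⁻¹ *
        ∑ Y ∈ Finset.univ.filter (fun Y : Fin k → Fin m → Bool => ∀ i, Y i a = X i a), g Y
    let Qm : ((Fin k → Fin m → Bool) → ℝ) → ((Fin k → Fin m → Bool) → ℝ) :=
      fun g _ => ((2 : ℝ) ^ (m * k))⁻¹ * ∑ Y : Fin k → Fin m → Bool, g Y
    |∑ X : Fin k → Fin m → Bool, f X * (Qm1 f X - Qm f X)|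
      ≤ (m : ℝ)⁻¹ * ∑ X : Fin k → Fin m → Bool, f X * f X := by
  intro Qm1 Qm
  set c : ℝ := (2 : ℝ) ^ ((m - 1) * k) with hc_def
  set N : ℝ := (2 : ℝ) ^ (m * k) with hN_def
  set S : ℝ := ∑ X : Fin k → Fin m → Bool, f X with hS_def
  set A : ℝ := ∑ X : Fin k → Fin m → Bool, f X * f X with hA_def
  have hc : c ≠ 0 := by positivity
  have hN : N ≠ 0 := by positivity
  have hm' : (m : ℝ) ≠ 0 := Nat.cast_ne_zero.mpr hm.ne'
  set g : (Fin k → Fin m → Bool) → ℝ :=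
    fun X => ∑ a : Fin m, (c⁻¹ * Sa f a X - N⁻¹ * S) with hg_def
  set D : ℝ := ∑ X : Fin k → Fin m → Bool, f X * g X with hD_def
  have hcard : (Finset.univ : Finset (Fin k → Fin m → Bool)).card = 2 ^ (m * k) := by
    rw [Finset.card_univ, Fintype.card_fun, Fintype.card_fun]
    simp [← pow_mul]
  -- general expansion of P a b
  have hPexp : ∀ a b : Fin m,
      ∑ X : Fin k → Fin m → Bool, (c⁻¹ * Sa f a X - N⁻¹ * S) * (c⁻¹ * Sa f b X - N⁻¹ * S)
      = c⁻¹ * c⁻¹ * (∑ X : Fin k → Fin m → Bool, Sa f a X * Sa f b X)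
        - c⁻¹ * (N⁻¹ * S) * (∑ X : Fin k → Fin m → Bool, Sa f a X)
        - c⁻¹ * (N⁻¹ * S) * (∑ X : Fin k → Fin m → Bool, Sa f b X)
        + N * (N⁻¹ * S * (N⁻¹ * S)) := by
    intro a b
    have : ∀ X : Fin k → Fin m → Bool,
        (c⁻¹ * Sa f a X - N⁻¹ * S) * (c⁻¹ * Sa f b X - N⁻¹ * S)
        = c⁻¹ * c⁻¹ * (Sa f a X * Sa f b X) - c⁻¹ * (N⁻¹ * S) * (Sa f a X)
          - c⁻¹ * (N⁻¹ * S) * (Sa f b X) + N⁻¹ * S * (N⁻¹ * S) := fun X => by ring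
    rw [Finset.sum_congr rfl (fun X _ => this X)]
    rw [Finset.sum_add_distrib, Finset.sum_sub_distrib, Finset.sum_sub_distrib,
      ← Finset.mul_sum, ← Finset.mul_sum, ← Finset.mul_sum, Finset.sum_const, hcard,
      nsmul_eq_mul]
    push_cast
    rw [← hN_def]
  -- diagonal terms
  have hP_diag : ∀ a : Fin m,
      ∑ X : Fin k → Fin m → Bool, (c⁻¹ * Sa f a X - N⁻¹ * S) * (c⁻¹ * Sa f a X - N⁻¹ * S)
      = c⁻¹ * (∑ X : Fin k → Fin m → Bool, f X * Sa f a X) - N⁻¹ * (S * S) := by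
    intro a
    rw [hPexp a a, sum_Sa_mul_self, sum_Sa, ← hc_def, ← hS_def]
    field_simp
    ring
  -- off-diagonal terms vanish
  have hP_off : ∀ a b : Fin m, a ≠ b →
      ∑ X : Fin k → Fin m → Bool, (c⁻¹ * Sa f a X - N⁻¹ * S) * (c⁻¹ * Sa f b X - N⁻¹ * S)
      = 0 := by
    intro a b hab
    have hm2 : 2 ≤ m := by
      have hnt : Nontrivial (Fin m) := ⟨⟨a, b, hab⟩⟩
      have h1 := Fintype.one_lt_card (α := Fin m)
      rw [Fintype.card_fin] at h1
      omega
    have hcc : c * c = N * (2 : ℝ) ^ ((m - 2) * k) := by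
      rw [hc_def, hN_def, ← pow_add, ← pow_add]
      congr 1
      rw [← add_mul, ← add_mul]
      congr 1
      omega
    rw [hPexp a b, sum_Sa_mul_Sa f hab, sum_Sa, sum_Sa, ← hc_def, ← hS_def]
    have hd : (2 : ℝ) ^ ((m - 2) * k) = c * c / N := by
      rw [hcc]; field_simp
    rw [hd]
    field_simp
    ring
  -- D = <f, g>  expanded
  have hfg : D = ∑ a : Fin m,
      (c⁻¹ * (∑ X : Fin k → Fin m → Bool, f X * Sa f a X) - N⁻¹ * (S * S)) := by
    rw [hD_def]
    have : ∀ X : Fin k → Fin m → Bool, f X * g X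
        = ∑ a : Fin m, (c⁻¹ * (f X * Sa f a X) - N⁻¹ * S * f X) := by
      intro X
      rw [hg_def, Finset.mul_sum]
      exact Finset.sum_congr rfl (fun a _ => by ring)
    rw [Finset.sum_congr rfl (fun X _ => this X), Finset.sum_comm]
    refine Finset.sum_congr rfl (fun a _ => ?_)
    rw [Finset.sum_sub_distrib, ← Finset.mul_sum, ← Finset.mul_sum, ← hS_def]
    ring
  -- <g, g> = D
  have hgg : ∑ X : Fin k → Fin m → Bool, g X * g X = D := by
    have expand : ∀ X : Fin k → Fin m → Bool, g X * g X
        = ∑ a : Fin m, ∑ b : Fin m,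
            (c⁻¹ * Sa f a X - N⁻¹ * S) * (c⁻¹ * Sa f b X - N⁻¹ * S) := by
      intro X
      rw [hg_def, Finset.sum_mul_sum]
    rw [Finset.sum_congr rfl (fun X _ => expand X), Finset.sum_comm]
    rw [Finset.sum_congr rfl (fun a (_ : a ∈ Finset.univ) => Finset.sum_comm)]
    have : ∀ a : Fin m,
        ∑ b : Fin m, ∑ X : Fin k → Fin m → Bool,
          (c⁻¹ * Sa f a X - N⁻¹ * S) * (c⁻¹ * Sa f b X - N⁻¹ * S)
        = c⁻¹ * (∑ X : Fin k → Fin m → Bool, f X * Sa f a X) - N⁻¹ * (S * S) := by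
      intro a
      rw [Finset.sum_eq_single_of_mem a (Finset.mem_univ a)
        (fun b _ hba => hP_off a b (fun h => hba h.symm))]
      exact hP_diag a
    rw [Finset.sum_congr rfl (fun a _ => this a), hfg]
  -- D ≥ 0
  have hD0 : 0 ≤ D := by
    rw [← hgg]
    exact Finset.sum_nonneg (fun X _ => mul_self_nonneg _)
  have hA0 : 0 ≤ A := Finset.sum_nonneg (fun X _ => mul_self_nonneg _)
  -- Cauchy-Schwarz: D^2 ≤ A * D
  have hCS : D ^ 2 ≤ A * D := by
    have h := Finset.sum_mul_sq_le_sq_mul_sq Finset.univ f g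
    rw [hD_def]
    calc (∑ X : Fin k → Fin m → Bool, f X * g X) ^ 2
        ≤ (∑ X : Fin k → Fin m → Bool, f X ^ 2) * ∑ X : Fin k → Fin m → Bool, g X ^ 2 := h
      _ = A * D := by
          rw [hA_def, ← hgg]
          congr 1 <;> exact Finset.sum_congr rfl (fun X _ => by rw [pow_two])
  have hDA : D ≤ A := by nlinarith [hCS, hD0, hA0]
  -- relate the goal to D
  have hL : ∑ X : Fin k → Fin m → Bool, f X * (Qm1 f X - Qm f X) = (m : ℝ)⁻¹ * D := by
    rw [hD_def, Finset.mul_sum]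
    refine Finset.sum_congr rfl (fun X _ => ?_)
    have h1 : Qm1 f X = (m : ℝ)⁻¹ * ∑ a : Fin m, c⁻¹ * Sa f a X := rfl
    have h2 : Qm f X = N⁻¹ * S := rfl
    have h3 : g X = ∑ a : Fin m, (c⁻¹ * Sa f a X - N⁻¹ * S) := rfl
    rw [h1, h2, h3, Finset.sum_sub_distrib, Finset.sum_const, Finset.card_univ,
      Fintype.card_fin, nsmul_eq_mul]
    field_simp
  rw [hL, abs_mul, abs_of_nonneg hD0, abs_of_nonneg (by positivity : (0:ℝ) ≤ (m:ℝ)⁻¹)]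
  have : (0:ℝ) < (m:ℝ)⁻¹ := by positivity
  gcongr
end
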